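/- Let q = p^t with p an odd prime and t ≥ 2, n = q+1, and a = n/2. For each 2 ≤ i ≤ a−1, there exists an MDS convolutional code over F_q with parameters (n, n−2i+1, 2; 1, 2i+2), i.e., its free distance 2i+2 equals the generalized Singleton bound (n−k)(⌊γ/k⌋+1)+γ+1 with k = n−2i+1 and γ = 2. -/

import Mathlib

set_option linter.unusedSectionVars false
set_option maxHeartbeats 1000000
set_option linter.unnecessarySimpa false

/-- The convolutional code generated by the polynomial matrix `G`. -/
def convCode {F : Type*} [Field F] {k n : ℕ}
    (G : Matrix (Fin k) (Fin n) (Polynomial F)) : Set (Fin n → Polynomial F) :=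
  {v | ∃ u : Fin k → Polynomial F, ∀ j, v j = ∑ i : Fin k, u i * G i j}

/-- A polynomial generator matrix is basic if it has a polynomial right inverse. -/
def isBasic {F : Type*} [Field F] {k n : ℕ}
    (G : Matrix (Fin k) (Fin n) (Polynomial F)) : Prop :=
  ∃ R : Matrix (Fin n) (Fin k) (Polynomial F), G * R = 1

/-- The `i`-th constraint length: the maximal degree in row `i`. -/
def rowDegree {F : Type*} [Field F] {k n : ℕ}
    (G : Matrix (Fin k) (Fin n) (Polynomial F)) (i : Fin k) : ℕ :=
  Finset.univ.sup fun j => (G i j).natDegree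

/-- The degree (overall constraint length) `γ = ∑ γ_i` of a generator matrix. -/
def convDegree {F : Type*} [Field F] {k n : ℕ}
    (G : Matrix (Fin k) (Fin n) (Polynomial F)) : ℕ :=
  ∑ i : Fin k, rowDegree G i

/-- The memory `m = max γ_i` of a generator matrix. -/
def convMemory {F : Type*} [Field F] {k n : ℕ}
    (G : Matrix (Fin k) (Fin n) (Polynomial F)) : ℕ :=
  Finset.univ.sup fun i => rowDegree G i

/-- A basic generator matrix is reduced if its overall constraint length is minimal
among all basic generator matrices of the same code. -/
def isReduced {F : Type*} [Field F] {k n : ℕ}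
    (G : Matrix (Fin k) (Fin n) (Polynomial F)) : Prop :=
  isBasic G ∧ ∀ G' : Matrix (Fin k) (Fin n) (Polynomial F),
    isBasic G' → convCode G' = convCode G → convDegree G ≤ convDegree G'

/-- The weight of `v(D) ∈ F[D]^n`: the total number of nonzero coefficients. -/
def polyWeight {F : Type*} [Field F] [DecidableEq F] {n : ℕ}
    (v : Fin n → Polynomial F) : ℕ :=
  ∑ j : Fin n, (v j).support.card

namespace MDSConv
open Polynomial Finset

variable {F : Type*} [Field F] [Fintype F] [DecidableEq F]

/-- column of a finite point -/
def colOf {q : ℕ} (e : Fin q ≃ F) (x : F) : Fin (q+1) := (e.symm x).castSucc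

lemma colOf_lt {q : ℕ} (e : Fin q ≃ F) (x : F) : ((colOf e x : Fin (q+1)) : ℕ) < q := by
  simpa [colOf] using (e.symm x).isLt

lemma colOf_inj {q : ℕ} (e : Fin q ≃ F) : Function.Injective (colOf e) := by
  intro x y h
  have : e.symm x = e.symm y := Fin.castSucc_injective _ h
  simpa using congrArg e this

lemma colOf_ne_last {q : ℕ} (e : Fin q ≃ F) (x : F) : colOf e x ≠ Fin.last q := by
  intro h
  have := colOf_lt e x
  rw [h] at this
  simp [Fin.last] at this

/-- the generator matrix -/
noncomputable def Gmat {q : ℕ} (e : Fin q ≃ F) (K : ℕ) : Matrix (Fin K) (Fin (q+1)) (Polynomial F) :=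
  fun r j =>
    if hj : (j : ℕ) < q then
      (if (r:ℕ) < K-2 then C ((e ⟨j, hj⟩)^(r:ℕ))
       else if (r:ℕ) = K-2 then C ((e ⟨j, hj⟩)^(K-2)) + X * C ((e ⟨j, hj⟩)^(K-1))
       else C ((e ⟨j, hj⟩)^(K-1)) + X * C ((e ⟨j, hj⟩)^(K-2)))
    else
      (if (r:ℕ) = K-3 then 1 else if (r:ℕ) = K-2 then 1 else 0)

lemma Gmat_colOf {q : ℕ} (e : Fin q ≃ F) (K : ℕ) (r : Fin K) (x : F) :
    Gmat e K r (colOf e x) =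
      (if (r:ℕ) < K-2 then C (x^(r:ℕ))
       else if (r:ℕ) = K-2 then C (x^(K-2)) + X * C (x^(K-1))
       else C (x^(K-1)) + X * C (x^(K-2))) := by
  have h := colOf_lt e x
  simp only [Gmat, dif_pos h]
  have : (⟨((colOf e x : Fin (q+1)) : ℕ), h⟩ : Fin q) = e.symm x := by
    apply Fin.ext; simp [colOf]
  rw [this, Equiv.apply_symm_apply]

lemma Gmat_last {q : ℕ} (e : Fin q ≃ F) (K : ℕ) (r : Fin K) :
    Gmat e K r (Fin.last q) =
      (if (r:ℕ) = K-3 then 1 else if (r:ℕ) = K-2 then 1 else 0) := by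
  simp [Gmat, Fin.last]

/-- splitting a sum over columns -/
lemma sum_cols {q : ℕ} (e : Fin q ≃ F) {A : Type*} [AddCommMonoid A] (g : Fin (q+1) → A) :
    ∑ j, g j = (∑ x : F, g (colOf e x)) + g (Fin.last q) := by
  rw [Fin.sum_univ_castSucc]
  congr 1
  exact (Equiv.sum_comp e.symm (fun y => g y.castSucc)).symm

/-- power sums over a finite field -/
lemma powsum {q : ℕ} (e : Fin q ≃ F) (hq : 3 ≤ q) (N : ℕ) (hN : N < 2*(q-1)) :
    ∑ x : F, x^N = if N = q-1 then (-1 : F) else 0 := by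
  have hcard : Fintype.card F = q := by
    rw [← Fintype.card_fin q]; exact Fintype.card_congr e.symm
  rcases lt_trichotomy N (q-1) with h | h | h
  · rw [if_neg (by omega)]
    have := FiniteField.sum_pow_lt_card_sub_one F N (by omega)
    exact this
  · subst h
    rw [if_pos rfl]
    have h1 : ∀ x : F, x^(q-1) = if x = 0 then 0 else 1 := by
      intro x
      by_cases hx : x = 0
      · simp [hx, zero_pow (show q-1 ≠ 0 by omega)]
      · rw [if_neg hx, ← hcard]
        exact FiniteField.pow_card_sub_one_eq_one x hx
    calc ∑ x : F, x^(q-1) = ∑ x : F, (if x = 0 then 0 else 1) := by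
          exact Finset.sum_congr rfl (fun x _ => h1 x)
      _ = ((univ.filter (fun x : F => ¬ x = 0)).card : F) := by
          rw [← Finset.sum_boole]
          exact Finset.sum_congr rfl (fun x _ => by by_cases hx : x = 0 <;> simp [hx])
      _ = (-1 : F) := by
          have hfilter : (univ.filter (fun x : F => ¬ x = 0)).card = q - 1 := by
            have : (univ.filter (fun x : F => ¬ x = 0)) = univ.erase 0 := by
              ext y; simp [Finset.mem_erase, and_comm]
            rw [this, Finset.card_erase_of_mem (Finset.mem_univ 0), Finset.card_univ, hcard]
          rw [hfilter, Nat.cast_sub (by omega), Nat.cast_one]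
          have : ((q : ℕ) : F) = 0 := by rw [← hcard]; exact FiniteField.cast_card_eq_zero F
          rw [this]; ring
  · rw [if_neg (by omega)]
    have hM : 0 < N - (q-1) ∧ N - (q-1) < q - 1 := by omega
    have hsplit : N = (N - (q-1)) + (q-1) := by omega
    calc ∑ x : F, x^N = ∑ x : F, x^(N-(q-1)) * x^(q-1) := by
          refine Finset.sum_congr rfl (fun x _ => ?_)
          rw [← pow_add, ← hsplit]
      _ = ∑ x : F, x^(N-(q-1)) := by
          refine Finset.sum_congr rfl (fun x _ => ?_)
          by_cases hx : x = 0
          · simp [hx, zero_pow (show N - (q-1) ≠ 0 by omega)]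
          · rw [← hcard, FiniteField.pow_card_sub_one_eq_one x hx, mul_one]
      _ = 0 := FiniteField.sum_pow_lt_card_sub_one F _ (by omega)


/-- polynomial with prescribed coefficients -/
noncomputable def mkPoly (K : ℕ) (c : ℕ → F) : Polynomial F :=
  ∑ m ∈ Finset.range K, C (c m) * X^m

lemma mkPoly_coeff (K : ℕ) (c : ℕ → F) (m : ℕ) :
    (mkPoly K c).coeff m = if m < K then c m else 0 := by
  unfold mkPoly
  rw [Polynomial.finset_sum_coeff]
  simp only [Polynomial.coeff_C_mul, Polynomial.coeff_X_pow]
  by_cases hm : m < K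
  · rw [if_pos hm, Finset.sum_eq_single m]
    · simp
    · intro b _ hb; simp [Ne.symm hb]
    · intro h; exact absurd (Finset.mem_range.2 hm) h
  · rw [if_neg hm]
    refine Finset.sum_eq_zero (fun b hb => ?_)
    rw [Finset.mem_range] at hb
    have : m ≠ b := by omega
    simp [this]

lemma mkPoly_eval (K : ℕ) (c : ℕ → F) (x : F) :
    (mkPoly K c).eval x = ∑ m ∈ Finset.range K, c m * x^m := by
  unfold mkPoly
  simp [Polynomial.eval_finset_sum]

lemma mkPoly_natDegree_le (K : ℕ) (c : ℕ → F) (d : ℕ) (h : ∀ m, d < m → m < K → c m = 0) :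
    (mkPoly K c).natDegree ≤ d := by
  rw [Polynomial.natDegree_le_iff_coeff_eq_zero]
  intro m hm
  rw [mkPoly_coeff]
  by_cases h2 : m < K
  · rw [if_pos h2]; exact h m hm h2
  · rw [if_neg h2]

lemma mkPoly_ne_zero (K : ℕ) (c : ℕ → F) (m : ℕ) (hm : m < K) (hc : c m ≠ 0) :
    mkPoly K c ≠ 0 := by
  intro h
  apply hc
  have := mkPoly_coeff K c m
  rw [h, Polynomial.coeff_zero, if_pos hm] at this
  exact this.symm

/-- eventually-previous coefficient -/
def prevc (p : Polynomial F) (j : ℕ) : F := if j = 0 then 0 else p.coeff (j-1)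

/-- coefficient function of the j-th D-slice of the codeword generated by u -/
noncomputable def cfun {K : ℕ} (hK : 3 ≤ K) (u : Fin K → Polynomial F) (j : ℕ) : ℕ → F :=
  fun m =>
    if hm : m < K-2 then (u ⟨m, by omega⟩).coeff j
    else if m = K-2 then (u ⟨K-2, by omega⟩).coeff j + prevc (u ⟨K-1, by omega⟩) j
    else if m = K-1 then (u ⟨K-1, by omega⟩).coeff j + prevc (u ⟨K-2, by omega⟩) j
    else 0

/-- The key evaluation identity: the j-th coefficient of the codeword at a finite
column is the evaluation of the slice polynomial. -/
lemma eval_slice {q K : ℕ} (e : Fin q ≃ F) (hK : 3 ≤ K) (u : Fin K → Polynomial F)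
    (j : ℕ) (x : F) :
    (∑ r : Fin K, u r * Gmat e K r (colOf e x)).coeff j
      = (mkPoly K (cfun hK u j)).eval x := by
  obtain ⟨K', rfl⟩ : ∃ K', K = K' + 2 := ⟨K - 2, by omega⟩
  have h2 : K' + 2 - 2 = K' := rfl
  have h1 : K' + 2 - 1 = K' + 1 := rfl
  -- RHS
  rw [mkPoly_eval, Finset.sum_range_succ, Finset.sum_range_succ,
    ← Fin.sum_univ_eq_sum_range (fun m => cfun hK u j m * x ^ m) K']
  -- LHS
  rw [Polynomial.finset_sum_coeff, Fin.sum_univ_castSucc, Fin.sum_univ_castSucc]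
  have hrow : ∀ i : Fin K',
      (u (i.castSucc.castSucc) * Gmat e (K'+2) (i.castSucc.castSucc) (colOf e x)).coeff j
        = cfun hK u j (i : ℕ) * x ^ (i : ℕ) := by
    intro i
    rw [Gmat_colOf]
    have hi : ((i.castSucc.castSucc : Fin (K'+2)) : ℕ) = (i : ℕ) := rfl
    rw [hi, if_pos (by omega : (i:ℕ) < K'+2-2), coeff_mul_C]
    have : cfun hK u j (i : ℕ) = (u ⟨(i:ℕ), by omega⟩).coeff j := by
      unfold cfun; rw [dif_pos (by omega : (i:ℕ) < K'+2-2)]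
    rw [this]
    congr 2
  rw [Finset.sum_congr rfl (fun i _ => hrow i)]
  -- the two special rows
  have hra : ((Fin.last K').castSucc : Fin (K'+2)) = ⟨K', by omega⟩ := rfl
  have hrb : (Fin.last (K'+1) : Fin (K'+2)) = ⟨K'+1, by omega⟩ := rfl
  rw [hra, hrb, Gmat_colOf, Gmat_colOf]
  have c1 : ¬ (K' < K') := lt_irrefl _
  have c2 : ¬ (K' + 1 < K') := by omega
  have c3 : ¬ (K' + 1 = K') := by omega
  simp only [h2, h1, c1, c2, c3, if_false, if_true, eq_self_iff_true]
  have expand : ∀ (p : Polynomial F) (a b : F),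
      (p * (C a + X * C b)).coeff j = p.coeff j * a + prevc p j * b := by
    intro p a b
    rw [mul_add, Polynomial.coeff_add, coeff_mul_C,
      show p * (X * C b) = (p * X) * C b by ring, coeff_mul_C]
    cases j with
    | zero => rw [Polynomial.coeff_mul_X_zero]; simp [prevc]
    | succ n => rw [Polynomial.coeff_mul_X]; simp [prevc]
  rw [expand, expand]
  have hca : cfun hK u j K' = (u ⟨K', by omega⟩).coeff j + prevc (u ⟨K'+1, by omega⟩) j := by
    unfold cfun
    rw [dif_neg (by omega), if_pos (by omega : K' = K'+2-2)]
    rfl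
  have hcb : cfun hK u j (K'+1)
      = (u ⟨K'+1, by omega⟩).coeff j + prevc (u ⟨K', by omega⟩) j := by
    unfold cfun
    rw [dif_neg (by omega), if_neg (by omega), if_pos (by omega : K'+1 = K'+2-1)]
    rfl
  rw [hca, hcb]
  ring


/-- number of columns whose j-th coefficient is nonzero -/
def Wj {q : ℕ} (v : Fin (q+1) → Polynomial F) (j : ℕ) : ℕ :=
  (Finset.univ.filter (fun col => (v col).coeff j ≠ 0)).card

lemma weight_ge_sum {q : ℕ} (v : Fin (q+1) → Polynomial F) (J : Finset ℕ) :
    ∑ j ∈ J, Wj v j ≤ polyWeight v := by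
  unfold Wj polyWeight
  have h1 : ∀ j, (Finset.univ.filter (fun col : Fin (q+1) => (v col).coeff j ≠ 0)).card
      = ∑ col : Fin (q+1), if (v col).coeff j ≠ 0 then 1 else 0 := by
    intro j; rw [Finset.card_filter]
  calc ∑ j ∈ J, (Finset.univ.filter (fun col : Fin (q+1) => (v col).coeff j ≠ 0)).card
      = ∑ j ∈ J, ∑ col : Fin (q+1), if (v col).coeff j ≠ 0 then 1 else 0 :=
        Finset.sum_congr rfl (fun j _ => h1 j)
    _ = ∑ col : Fin (q+1), ∑ j ∈ J, if (v col).coeff j ≠ 0 then 1 else 0 :=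
        Finset.sum_comm
    _ ≤ ∑ col : Fin (q+1), (v col).support.card := by
        refine Finset.sum_le_sum (fun col _ => ?_)
        rw [← Finset.card_filter]
        refine Finset.card_le_card (fun j hj => ?_)
        rw [Finset.mem_filter] at hj
        exact Polynomial.mem_support_iff.2 hj.2

lemma count_ge {q : ℕ} (e : Fin q ≃ F) (v : Fin (q+1) → Polynomial F) (j : ℕ)
    (Q : Polynomial F) (hQ : Q ≠ 0)
    (hev : ∀ x : F, (v (colOf e x)).coeff j = Q.eval x) :
    q - Q.natDegree ≤ Wj v j := by
  have hcard : Fintype.card F = q := by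
    rw [← Fintype.card_fin q]; exact Fintype.card_congr e.symm
  classical
  have hZ : (Finset.univ.filter (fun x : F => ¬ Q.eval x ≠ 0)).card ≤ Q.natDegree := by
    have hsub : (Finset.univ.filter (fun x : F => ¬ Q.eval x ≠ 0)) ⊆ Q.roots.toFinset := by
      intro x hx
      rw [Finset.mem_filter, not_not] at hx
      rw [Multiset.mem_toFinset, Polynomial.mem_roots hQ]
      exact hx.2
    calc (Finset.univ.filter (fun x : F => ¬ Q.eval x ≠ 0)).card
        ≤ Q.roots.toFinset.card := Finset.card_le_card hsub
      _ ≤ Multiset.card Q.roots := Multiset.toFinset_card_le _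
      _ ≤ Q.natDegree := Polynomial.card_roots' Q
  have hNZcard : q - Q.natDegree ≤ (Finset.univ.filter (fun x : F => Q.eval x ≠ 0)).card := by
    have := Finset.card_filter_add_card_filter_not
      (s := (Finset.univ : Finset F)) (p := fun x : F => Q.eval x ≠ 0)
    rw [Finset.card_univ, hcard] at this
    omega
  refine le_trans hNZcard ?_

  unfold Wj
  refine Finset.card_le_card_of_injOn (colOf e) (fun x hx => ?_) ?_
  · rw [Finset.mem_coe, Finset.mem_filter] at hx ⊢
    refine ⟨Finset.mem_univ _, ?_⟩
    rw [hev x]; exact hx.2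
  · exact fun x _ y _ h => colOf_inj e h

lemma count_ge' {q : ℕ} (e : Fin q ≃ F) (v : Fin (q+1) → Polynomial F) (j : ℕ)
    (Q : Polynomial F) (hQ : Q ≠ 0)
    (hev : ∀ x : F, (v (colOf e x)).coeff j = Q.eval x)
    (hinf : (v (Fin.last q)).coeff j ≠ 0) :
    q - Q.natDegree + 1 ≤ Wj v j := by
  have hcard : Fintype.card F = q := by
    rw [← Fintype.card_fin q]; exact Fintype.card_congr e.symm
  classical
  have hZ : (Finset.univ.filter (fun x : F => ¬ Q.eval x ≠ 0)).card ≤ Q.natDegree := by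
    have hsub : (Finset.univ.filter (fun x : F => ¬ Q.eval x ≠ 0)) ⊆ Q.roots.toFinset := by
      intro x hx
      rw [Finset.mem_filter, not_not] at hx
      rw [Multiset.mem_toFinset, Polynomial.mem_roots hQ]
      exact hx.2
    calc (Finset.univ.filter (fun x : F => ¬ Q.eval x ≠ 0)).card
        ≤ Q.roots.toFinset.card := Finset.card_le_card hsub
      _ ≤ Multiset.card Q.roots := Multiset.toFinset_card_le _
      _ ≤ Q.natDegree := Polynomial.card_roots' Q
  have hNZcard : q - Q.natDegree ≤ (Finset.univ.filter (fun x : F => Q.eval x ≠ 0)).card := by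
    have := Finset.card_filter_add_card_filter_not
      (s := (Finset.univ : Finset F)) (p := fun x : F => Q.eval x ≠ 0)
    rw [Finset.card_univ, hcard] at this
    omega
  have himg : insert (Fin.last q) ((Finset.univ.filter (fun x : F => Q.eval x ≠ 0)).image (colOf e))
      ⊆ Finset.univ.filter (fun col => (v col).coeff j ≠ 0) := by
    intro c hc
    rw [Finset.mem_insert] at hc
    rcases hc with rfl | hc
    · exact Finset.mem_filter.2 ⟨Finset.mem_univ _, hinf⟩
    · rw [Finset.mem_image] at hc
      obtain ⟨x, hx, rfl⟩ := hc
      rw [Finset.mem_filter] at hx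
      refine Finset.mem_filter.2 ⟨Finset.mem_univ _, ?_⟩
      rw [hev x]; exact hx.2
  have hnotmem : Fin.last q ∉ (Finset.univ.filter (fun x : F => Q.eval x ≠ 0)).image (colOf e) := by
    rw [Finset.mem_image]
    rintro ⟨x, _, hx⟩
    exact colOf_ne_last e x hx
  have hcount : (Finset.univ.filter (fun x : F => Q.eval x ≠ 0)).card + 1 ≤ Wj v j := by
    unfold Wj
    calc (Finset.univ.filter (fun x : F => Q.eval x ≠ 0)).card + 1 = ((Finset.univ.filter (fun x : F => Q.eval x ≠ 0)).image (colOf e)).card + 1 := by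
          rw [Finset.card_image_of_injective _ (colOf_inj e)]
      _ = (insert (Fin.last q) ((Finset.univ.filter (fun x : F => Q.eval x ≠ 0)).image (colOf e))).card := by
          rw [Finset.card_insert_of_notMem hnotmem]
      _ ≤ _ := Finset.card_le_card himg
  omega


lemma dist_lb {q K : ℕ} (e : Fin q ≃ F) (hq : 9 ≤ q) (hK3 : 3 ≤ K) (hKq : K + 2 ≤ q)
    (v : Fin (q+1) → Polynomial F) (hv : v ∈ convCode (Gmat e K)) (hv0 : v ≠ 0) :
    q + 4 - K ≤ polyWeight v := by
  classical
  obtain ⟨u, hu⟩ := hv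
  have hq3 : 3 ≤ q := by omega
  set ra : Fin K := ⟨K-2, by omega⟩ with hra
  set rb : Fin K := ⟨K-1, by omega⟩ with hrb
  have hev : ∀ (j : ℕ) (x : F), (v (colOf e x)).coeff j
      = (mkPoly K (cfun hK3 u j)).eval x := by
    intro j x
    rw [hu (colOf e x)]
    exact eval_slice e hK3 u j x
  by_cases hab : u ra = 0 ∧ u rb = 0
  · -- Case 1 : only constant rows involved
    obtain ⟨r, hr⟩ : ∃ r, u r ≠ 0 := by
      by_contra h
      push_neg at h
      apply hv0
      funext j
      rw [hu j]
      exact Finset.sum_eq_zero (fun r _ => by rw [h r, zero_mul])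
    have hrlt : (r : ℕ) < K - 2 := by
      rcases lt_or_ge (r : ℕ) (K-2) with h | h
      · exact h
      · exfalso
        have : r = ra ∨ r = rb := by
          rcases Nat.lt_or_ge (r : ℕ) (K-1) with h2 | h2
          · left; apply Fin.ext; simp [hra]; omega
          · right; apply Fin.ext; simp [hrb]; have := r.isLt; omega
        rcases this with rfl | rfl
        · exact hr hab.1
        · exact hr hab.2
    obtain ⟨j, hj⟩ : ∃ j, (u r).coeff j ≠ 0 := by
      by_contra h
      push_neg at h
      exact hr (Polynomial.ext (fun n => by rw [h n, Polynomial.coeff_zero]))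
    -- properties of the slice
    have hcr : cfun hK3 u j (r : ℕ) = (u r).coeff j := by
      unfold cfun
      rw [dif_pos hrlt]
    have hcK2 : ∀ j' : ℕ, cfun hK3 u j' (K-2) = 0 := by
      intro j'
      unfold cfun
      rw [dif_neg (by omega), if_pos rfl]
      show (u ra).coeff j' + prevc (u rb) j' = 0
      rw [hab.1, hab.2]
      simp [prevc]
    have hcK1 : ∀ j' : ℕ, cfun hK3 u j' (K-1) = 0 := by
      intro j'
      unfold cfun
      rw [dif_neg (by omega), if_neg (by omega), if_pos rfl]
      show (u rb).coeff j' + prevc (u ra) j' = 0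
      rw [hab.1, hab.2]
      simp [prevc]
    have hQne : mkPoly K (cfun hK3 u j) ≠ 0 :=
      mkPoly_ne_zero K _ (r : ℕ) (by omega) (by rw [hcr]; exact hj)
    have hWle : Wj v j ≤ polyWeight v := by
      have := weight_ge_sum v {j}
      simpa using this
    -- the top constant coefficient
    by_cases ctop : cfun hK3 u j (K-3) = 0
    · -- degree drops to K-4 ; also r.val ≠ K-3 so 4 ≤ K
      have hrne : (r : ℕ) ≠ K-3 := by
        intro h
        rw [← h] at ctop
        exact hj (by rw [← hcr]; exact ctop)
      have hK4 : 4 ≤ K := by omega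
      have hdeg : (mkPoly K (cfun hK3 u j)).natDegree ≤ K-4 := by
        refine mkPoly_natDegree_le K _ (K-4) (fun m hm hmK => ?_)
        rcases show m = K-3 ∨ m = K-2 ∨ m = K-1 by omega with h | h | h
        · rw [h]; exact ctop
        · rw [h]; exact hcK2 j
        · rw [h]; exact hcK1 j
      have := count_ge e v j _ hQne (hev j)
      have : q - (K-4) ≤ Wj v j := le_trans (by omega) this
      omega
    · -- the point at infinity also contributes
      have hdeg : (mkPoly K (cfun hK3 u j)).natDegree ≤ K-3 := by
        refine mkPoly_natDegree_le K _ (K-3) (fun m hm hmK => ?_)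
        rcases show m = K-2 ∨ m = K-1 by omega with h | h
        · rw [h]; exact hcK2 j
        · rw [h]; exact hcK1 j
      have hinf : (v (Fin.last q)).coeff j ≠ 0 := by
        rw [hu (Fin.last q)]
        have hterm : ∀ s : Fin K, (u s * Gmat e K s (Fin.last q)).coeff j
            = (if (s:ℕ) = K-3 then (u s).coeff j else 0) := by
          intro s
          rw [Gmat_last]
          by_cases h3 : (s:ℕ) = K-3
          · rw [if_pos h3, if_pos h3, mul_one]
          · rw [if_neg h3, if_neg h3]
            by_cases h2 : (s:ℕ) = K-2
            · rw [if_pos h2]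
              have : s = ra := Fin.ext (by simp [hra, h2])
              rw [this, hab.1]
              simp
            · rw [if_neg h2, mul_zero, Polynomial.coeff_zero]
        rw [Polynomial.finset_sum_coeff, Finset.sum_congr rfl (fun s _ => hterm s)]
        have hsum : (∑ s : Fin K, if (s:ℕ) = K-3 then (u s).coeff j else 0)
            = (u (⟨K-3, by omega⟩ : Fin K)).coeff j := by
          rw [Finset.sum_eq_single (⟨K-3, by omega⟩ : Fin K)]
          · simp
          · intro b _ hb
            rw [if_neg (fun h => hb (Fin.ext h))]
          · intro h; exact absurd (Finset.mem_univ _) h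
        rw [hsum]
        have hc3 : cfun hK3 u j (K-3) = (u (⟨K-3, by omega⟩ : Fin K)).coeff j := by
          unfold cfun
          rw [dif_pos (by omega)]
        rw [← hc3]
        exact ctop
      have hcount := count_ge' e v j _ hQne (hev j) hinf
      have hdg := Nat.le_of_lt_succ (Nat.lt_succ_of_le hdeg)
      omega
  · -- Case 2 : one of the two degree-one rows is used
    have hT : ((u ra).support ∪ (u rb).support).Nonempty := by
      rcases not_and_or.1 hab with h | h
      · obtain ⟨j, hj⟩ := Polynomial.support_nonempty.2 h
        exact ⟨j, Finset.mem_union_left _ hj⟩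
      · obtain ⟨j, hj⟩ := Polynomial.support_nonempty.2 h
        exact ⟨j, Finset.mem_union_right _ hj⟩
    set T := (u ra).support ∪ (u rb).support with hTdef
    set jU := T.max' hT with hjU
    set S := Finset.univ.biUnion (fun r : Fin K => (u r).support) with hSdef
    have hjUS : jU ∈ S := by
      rcases Finset.mem_union.1 (T.max'_mem hT) with h | h
      · exact Finset.mem_biUnion.2 ⟨ra, Finset.mem_univ _, h⟩
      · exact Finset.mem_biUnion.2 ⟨rb, Finset.mem_univ _, h⟩
    have hS : S.Nonempty := ⟨jU, hjUS⟩
    set j0 := S.min' hS with hj0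
    have hj0jU : j0 ≤ jU := S.min'_le _ hjUS
    -- coefficients below j0 vanish
    have hlow : ∀ (r : Fin K) (j' : ℕ), j' < j0 → (u r).coeff j' = 0 := by
      intro r j' hlt
      by_contra h
      have : j' ∈ S := Finset.mem_biUnion.2 ⟨r, Finset.mem_univ _,
        Polynomial.mem_support_iff.2 h⟩
      exact absurd (S.min'_le _ this) (by omega)
    -- coefficients of the two special rows above jU vanish
    have hhigh : ∀ j' : ℕ, jU < j' → (u ra).coeff j' = 0 ∧ (u rb).coeff j' = 0 := by
      intro j' hlt
      constructor
      · by_contra h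
        have : j' ∈ T := Finset.mem_union_left _ (Polynomial.mem_support_iff.2 h)
        exact absurd (T.le_max' _ this) (by omega)
      · by_contra h
        have : j' ∈ T := Finset.mem_union_right _ (Polynomial.mem_support_iff.2 h)
        exact absurd (T.le_max' _ this) (by omega)
    -- the slice at j0 is nonzero
    have hQ0 : mkPoly K (cfun hK3 u j0) ≠ 0 := by
      have : j0 ∈ S := S.min'_mem hS
      obtain ⟨r, _, hr⟩ := Finset.mem_biUnion.1 this
      rw [Polynomial.mem_support_iff] at hr
      rcases lt_or_ge (r:ℕ) (K-2) with h | h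
      · refine mkPoly_ne_zero K _ (r:ℕ) (by omega) ?_
        unfold cfun
        rw [dif_pos h]
        exact hr
      · have hprev : ∀ s : Fin K, prevc (u s) j0 = 0 := by
          intro s
          unfold prevc
          split
          · rfl
          · exact hlow s (j0-1) (by omega)
        have : r = ra ∨ r = rb := by
          rcases Nat.lt_or_ge (r : ℕ) (K-1) with h2 | h2
          · left; apply Fin.ext; simp [hra]; omega
          · right; apply Fin.ext; simp [hrb]; have := r.isLt; omega
        rcases this with rfl | rfl
        · refine mkPoly_ne_zero K _ (K-2) (by omega) ?_
          unfold cfun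
          rw [dif_neg (by omega), if_pos rfl]
          show (u ra).coeff j0 + prevc (u rb) j0 ≠ 0
          rw [hprev rb, add_zero]
          exact hr
        · refine mkPoly_ne_zero K _ (K-1) (by omega) ?_
          unfold cfun
          rw [dif_neg (by omega), if_neg (by omega), if_pos rfl]
          show (u rb).coeff j0 + prevc (u ra) j0 ≠ 0
          rw [hprev ra, add_zero]
          exact hr
    -- the slice at jU + 1 is nonzero
    have hQt : mkPoly K (cfun hK3 u (jU+1)) ≠ 0 := by
      rcases Finset.mem_union.1 (T.max'_mem hT) with h | h
      · rw [Polynomial.mem_support_iff] at h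
        refine mkPoly_ne_zero K _ (K-1) (by omega) ?_
        unfold cfun
        rw [dif_neg (by omega), if_neg (by omega), if_pos rfl]
        show (u rb).coeff (jU+1) + prevc (u ra) (jU+1) ≠ 0
        rw [(hhigh (jU+1) (by omega)).2]
        unfold prevc
        rw [if_neg (by omega), zero_add]
        simpa using h
      · rw [Polynomial.mem_support_iff] at h
        refine mkPoly_ne_zero K _ (K-2) (by omega) ?_
        unfold cfun
        rw [dif_neg (by omega), if_pos rfl]
        show (u ra).coeff (jU+1) + prevc (u rb) (jU+1) ≠ 0
        rw [(hhigh (jU+1) (by omega)).1]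
        unfold prevc
        rw [if_neg (by omega), zero_add]
        simpa using h
    have hdeg0 : (mkPoly K (cfun hK3 u j0)).natDegree ≤ K-1 :=
      mkPoly_natDegree_le K _ (K-1) (fun m hm hmK => by omega)
    have hdegt : (mkPoly K (cfun hK3 u (jU+1))).natDegree ≤ K-1 :=
      mkPoly_natDegree_le K _ (K-1) (fun m hm hmK => by omega)
    have hc0 := count_ge e v j0 _ hQ0 (hev j0)
    have hct := count_ge e v (jU+1) _ hQt (hev (jU+1))
    have hWsum : Wj v j0 + Wj v (jU+1) ≤ polyWeight v := by
      have hne : j0 ≠ jU + 1 := by omega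
      have := weight_ge_sum v {j0, jU+1}
      rwa [Finset.sum_pair hne] at this
    omega


lemma exists_min_weight {q K : ℕ} (e : Fin q ≃ F) (hq : 9 ≤ q) (hK3 : 3 ≤ K)
    (hKq : K + 2 ≤ q) :
    ∃ v ∈ convCode (Gmat e K), v ≠ 0 ∧ polyWeight v = q + 4 - K := by
  classical
  -- the set of K-3 roots
  set Z : Finset F := Finset.image (fun l : Fin (K-3) => e (Fin.castLE (by omega) l))
    Finset.univ with hZdef
  have hZcard : Z.card = K-3 := by
    rw [hZdef, Finset.card_image_of_injective _
      (fun a b h => by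
        have := e.injective h
        exact Fin.castLE_injective _ this), Finset.card_univ, Fintype.card_fin]
  set f : Polynomial F := ∏ z ∈ Z, (X - C z) with hfdef
  have hfmonic : f.Monic := monic_prod_of_monic _ _ (fun z _ => monic_X_sub_C z)
  have hfdeg : f.natDegree = K-3 := by
    rw [hfdef, Polynomial.natDegree_prod _ _ (fun z _ => X_sub_C_ne_zero z)]
    simp [hZcard]
  have hfeval : ∀ x : F, (f.eval x = 0 ↔ x ∈ Z) := by
    intro x
    rw [hfdef, Polynomial.eval_prod, Finset.prod_eq_zero_iff]
    constructor
    · rintro ⟨z, hz, h⟩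
      simp only [Polynomial.eval_sub, Polynomial.eval_X, Polynomial.eval_C] at h
      have : x = z := sub_eq_zero.1 h
      rwa [this]
    · intro hx
      exact ⟨x, hx, by simp⟩
  -- the codeword
  set v : Fin (q+1) → Polynomial F := fun col =>
    if h : (col : ℕ) < q then C (f.eval (e ⟨col, h⟩)) else C 1 with hvdef
  have hvcol : ∀ x : F, v (colOf e x) = C (f.eval x) := by
    intro x
    have h := colOf_lt e x
    rw [hvdef]
    simp only [dif_pos h]
    congr
    have : (⟨((colOf e x : Fin (q+1)) : ℕ), h⟩ : Fin q) = e.symm x := by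
      apply Fin.ext; simp [colOf]
    rw [this, Equiv.apply_symm_apply]
  have hvlast : v (Fin.last q) = C 1 := by
    rw [hvdef]; simp [Fin.last]
  refine ⟨v, ?_, ?_, ?_⟩
  · -- membership
    refine ⟨fun r => if (r:ℕ) < K-2 then C (f.coeff (r:ℕ)) else 0, fun col => ?_⟩
    by_cases hcol : (col : ℕ) < q
    · set x := e ⟨col, hcol⟩ with hx
      have hcolOf : col = colOf e x := by
        apply Fin.ext
        simp [colOf, hx]
      rw [hcolOf, hvcol x]
      have hterm : ∀ r : Fin K, (if (r:ℕ) < K-2 then C (f.coeff (r:ℕ)) else 0)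
          * Gmat e K r (colOf e x)
          = (if (r:ℕ) < K-2 then C (f.coeff (r:ℕ) * x^(r:ℕ)) else 0) := by
        intro r
        by_cases h : (r:ℕ) < K-2
        · rw [if_pos h, if_pos h, Gmat_colOf, if_pos h, ← Polynomial.C_mul]
        · rw [if_neg h, if_neg h, zero_mul]
      rw [Finset.sum_congr rfl (fun r _ => hterm r)]
      have : (∑ r : Fin K, if (r:ℕ) < K-2 then C (f.coeff (r:ℕ) * x^(r:ℕ)) else 0)
          = C (∑ m ∈ Finset.range (K-2), f.coeff m * x^m) := by
        calc (∑ r : Fin K, if (r:ℕ) < K-2 then C (f.coeff (r:ℕ) * x^(r:ℕ)) else 0)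
            = ∑ m ∈ Finset.range K, (if m < K-2 then C (f.coeff m * x^m) else 0) :=
              Fin.sum_univ_eq_sum_range
                (fun m => if m < K - 2 then C (f.coeff m * x ^ m) else 0) K
          _ = ∑ m ∈ Finset.range (K-2), (if m < K-2 then C (f.coeff m * x^m) else 0) := by
              refine (Finset.sum_subset (Finset.range_subset_range.2 (by omega)) ?_).symm
              intro m hm hnm
              rw [Finset.mem_range] at hm
              rw [Finset.mem_range] at hnm
              rw [if_neg (by omega)]
          _ = ∑ m ∈ Finset.range (K-2), C (f.coeff m * x^m) :=
              Finset.sum_congr rfl (fun m hm => if_pos (Finset.mem_range.1 hm))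
          _ = C (∑ m ∈ Finset.range (K-2), f.coeff m * x^m) := (map_sum C _ _).symm
      rw [this, ← Polynomial.eval_eq_sum_range' (by omega : f.natDegree < K-2)]
    · -- infinity column
      have hcol' : col = Fin.last q := by
        apply Fin.ext
        have := col.isLt
        simp only [Fin.last]
        omega
      rw [hcol', hvlast]
      have hterm : ∀ r : Fin K, (if (r:ℕ) < K-2 then C (f.coeff (r:ℕ)) else 0)
          * Gmat e K r (Fin.last q)
          = (if (r:ℕ) = K-3 then C (f.coeff (K-3)) else 0) := by
        intro r
        rw [Gmat_last]
        by_cases h3 : (r:ℕ) = K-3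
        · rw [if_pos h3, if_pos h3, if_pos (by omega), mul_one, h3]
        · rw [if_neg h3, if_neg h3]
          by_cases h2 : (r:ℕ) = K-2
          · rw [if_neg (show ¬ (r:ℕ) < K-2 by omega), zero_mul]
          · by_cases h : (r:ℕ) < K-2
            · rw [if_pos h, if_neg h2, mul_zero]
            · rw [if_neg h, zero_mul]
      rw [Finset.sum_congr rfl (fun r _ => hterm r),
        Finset.sum_eq_single (⟨K-3, by omega⟩ : Fin K)]
      · rw [if_pos rfl]
        have : f.coeff (K-3) = 1 := by
          rw [← hfdeg]
          exact hfmonic.coeff_natDegree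
        rw [this]
      · intro b _ hb
        rw [if_neg (fun h => hb (Fin.ext h))]
      · intro h; exact absurd (Finset.mem_univ _) h
  · -- nonzero
    intro h
    have := congrFun h (Fin.last q)
    rw [hvlast] at this
    simp at this
  · -- weight
    unfold polyWeight
    rw [sum_cols e (fun col => (v col).support.card)]
    have hsum : ∀ x : F, (v (colOf e x)).support.card = if x ∈ Z then 0 else 1 := by
      intro x
      rw [hvcol x]
      by_cases hx : x ∈ Z
      · rw [if_pos hx, (hfeval x).2 hx]
        simp
      · rw [if_neg hx]
        have : f.eval x ≠ 0 := fun h => hx ((hfeval x).1 h)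
        rw [Polynomial.support_C this]
        simp
    rw [Finset.sum_congr rfl (fun x _ => hsum x), hvlast]
    have h1 : (C (1:F)).support.card = 1 := by
      rw [Polynomial.support_C one_ne_zero]; simp
    rw [h1]
    have hcard : Fintype.card F = q := by
      rw [← Fintype.card_fin q]; exact Fintype.card_congr e.symm
    have : (∑ x : F, if x ∈ Z then 0 else 1) = q - (K-3) := by
      have h1 : (∑ x : F, if x ∈ Z then (0:ℕ) else 1)
          = (Finset.univ.filter (fun x : F => ¬ x ∈ Z)).card := by
        rw [Finset.card_filter]
        exact Finset.sum_congr rfl (fun x _ => by by_cases h : x ∈ Z <;> simp [h])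
      have h2 : (Finset.univ.filter (fun x : F => ¬ x ∈ Z)) = Finset.univ \ Z := by
        ext y; simp
      rw [h1, h2, Finset.card_sdiff_of_subset (Finset.subset_univ Z), Finset.card_univ, hcard, hZcard]
    rw [this]
    omega


/-- the right inverse matrix -/
noncomputable def Rmat {q : ℕ} (e : Fin q ≃ F) (K : ℕ) :
    Matrix (Fin (q+1)) (Fin K) (Polynomial F) :=
  fun j r =>
    if hj : (j : ℕ) < q then
      (if (r:ℕ) < K-2 then -C ((e ⟨j,hj⟩)^(q-1-(r:ℕ)))
       else if (r:ℕ) = K-2 then C ((e ⟨j,hj⟩)^(q+2-K))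
       else -C ((e ⟨j,hj⟩)^(q-K)) - X * C ((e ⟨j,hj⟩)^(q+2-K)))
    else (if (r:ℕ) = K-2 then 1 else if (r:ℕ) = K-1 then -C 1 * X else 0)

lemma Rmat_colOf {q : ℕ} (e : Fin q ≃ F) (K : ℕ) (r : Fin K) (x : F) :
    Rmat e K (colOf e x) r =
      (if (r:ℕ) < K-2 then -C (x^(q-1-(r:ℕ)))
       else if (r:ℕ) = K-2 then C (x^(q+2-K))
       else -C (x^(q-K)) - X * C (x^(q+2-K))) := by
  have h := colOf_lt e x
  simp only [Rmat, dif_pos h]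
  have : (⟨((colOf e x : Fin (q+1)) : ℕ), h⟩ : Fin q) = e.symm x := by
    apply Fin.ext; simp [colOf]
  rw [this, Equiv.apply_symm_apply]

lemma Rmat_last {q : ℕ} (e : Fin q ≃ F) (K : ℕ) (r : Fin K) :
    Rmat e K (Fin.last q) r =
      (if (r:ℕ) = K-2 then 1 else if (r:ℕ) = K-1 then -C 1 * X else 0) := by
  simp [Rmat, Fin.last]

lemma sum_pow_C {q : ℕ} (e : Fin q ≃ F) (hq3 : 3 ≤ q) (N : ℕ) (hN : N < 2*(q-1)) :
    (∑ x : F, C (x^N) : Polynomial F) = if N = q-1 then -C 1 else 0 := by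
  rw [← map_sum, powsum e hq3 N hN]
  split <;> simp

lemma GR_one {q K : ℕ} (e : Fin q ≃ F) (hq : 9 ≤ q) (hK3 : 3 ≤ K) (hKq : K + 2 ≤ q) :
    Gmat e K * Rmat e K = 1 := by
  have hq3 : 3 ≤ q := by omega
  ext r r'
  rw [Matrix.mul_apply, sum_cols e (fun j => Gmat e K r j * Rmat e K j r'),
    Gmat_last, Rmat_last, Matrix.one_apply]
  have hval : (r = r') ↔ ((r:ℕ) = (r':ℕ)) := ⟨fun h => by rw [h], fun h => Fin.ext h⟩
  rcases lt_trichotomy (r:ℕ) (K-2) with hr | hr | hr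
  · rcases lt_trichotomy (r':ℕ) (K-2) with hr' | hr' | hr'
    · -- both constant
      have hterm : ∀ x : F, Gmat e K r (colOf e x) * Rmat e K (colOf e x) r'
          = -C (x^((r:ℕ) + (q-1-(r':ℕ)))) := by
        intro x
        rw [Gmat_colOf, Rmat_colOf, if_pos hr, if_pos hr', pow_add, map_mul]
        ring
      have hrK : (r:ℕ) + 5 ≤ q := by omega
      have hrK' : (r':ℕ) + 5 ≤ q := by omega
      rw [Finset.sum_congr rfl (fun x _ => hterm x), Finset.sum_neg_distrib,
        sum_pow_C e hq3 _ (by omega)]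
      have hNe : ((r:ℕ) + (q-1-(r':ℕ)) = q-1) ↔ ((r:ℕ) = (r':ℕ)) := by omega
      have hR1 : ¬ ((r':ℕ) = K-2) := by omega
      have hR2 : ¬ ((r':ℕ) = K-1) := by omega
      simp only [hR1, hR2, if_false, mul_zero, add_zero]
      by_cases hrr : (r:ℕ) = (r':ℕ)
      · rw [if_pos (hNe.2 hrr), if_pos (hval.2 hrr)]
        simp
      · rw [if_neg (fun h => hrr (hNe.1 h)), if_neg (fun h => hrr (hval.1 h))]
        simp
    · -- r constant, r' = a-dual
      have hrK : (r:ℕ) + 5 ≤ q := by omega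
      have hterm : ∀ x : F, Gmat e K r (colOf e x) * Rmat e K (colOf e x) r'
          = C (x^((r:ℕ) + (q+2-K))) := by
        intro x
        rw [Gmat_colOf, Rmat_colOf, if_pos hr, if_neg (by omega), if_pos hr']
        simp only [pow_add, map_mul]
      rw [Finset.sum_congr rfl (fun x _ => hterm x), sum_pow_C e hq3 _ (by omega)]
      have hRne : ¬ r = r' := fun h => by rw [hval] at h; omega
      rw [if_neg hRne, if_pos hr', if_neg (by omega : ¬ (r:ℕ) = K-2)]
      by_cases h3 : (r:ℕ) = K-3
      · rw [if_pos (by omega), if_pos h3]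
        simp
      · rw [if_neg (by omega), if_neg h3]
        simp
    · -- r constant, r' = b-dual
      have hrK : (r:ℕ) + 5 ≤ q := by omega
      have hr'K : (r':ℕ) = K-1 := by have := r'.isLt; omega
      have hterm : ∀ x : F, Gmat e K r (colOf e x) * Rmat e K (colOf e x) r'
          = -C (x^((r:ℕ) + (q-K))) + (-C (x^((r:ℕ) + (q+2-K)))) * X := by
        intro x
        rw [Gmat_colOf, Rmat_colOf, if_pos hr, if_neg (by omega), if_neg (by omega)]
        simp only [pow_add, map_mul]
        ring
      rw [Finset.sum_congr rfl (fun x _ => hterm x)]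
      simp only [Finset.sum_add_distrib, Finset.sum_neg_distrib, ← Finset.sum_mul]
      rw [sum_pow_C e hq3 _ (by omega), sum_pow_C e hq3 _ (by omega)]
      have hRne : ¬ r = r' := fun h => by rw [hval] at h; omega
      rw [if_neg hRne, if_neg (by omega : ¬ (r:ℕ) + (q-K) = q-1),
        if_neg (by omega : ¬ ((r':ℕ) = K-2)), if_pos hr'K, if_neg (by omega : ¬ (r:ℕ) = K-2)]
      by_cases h3 : (r:ℕ) = K-3
      · rw [if_pos (by omega), if_pos h3]
        simp
      · rw [if_neg (by omega), if_neg h3]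
        simp
  · -- r = row a
    have hG : ∀ x : F, Gmat e K r (colOf e x) = C (x^(K-2)) + X * C (x^(K-1)) := by
      intro x
      rw [Gmat_colOf, if_neg (by omega), if_pos hr]
    have hGinf : (if (r:ℕ) = K-3 then (1:Polynomial F) else if (r:ℕ) = K-2 then 1 else 0)
        = 1 := by
      rw [if_neg (by omega), if_pos hr]
    rw [hGinf]
    rcases lt_trichotomy (r':ℕ) (K-2) with hr' | hr' | hr'
    · -- a row, constant dual
      have hr'K : (r':ℕ) + 5 ≤ q := by omega
      have hterm : ∀ x : F, Gmat e K r (colOf e x) * Rmat e K (colOf e x) r'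
          = -C (x^((K-2) + (q-1-(r':ℕ)))) + (-C (x^((K-1) + (q-1-(r':ℕ))))) * X := by
        intro x
        rw [hG, Rmat_colOf, if_pos hr']
        simp only [pow_add, map_mul]
        ring
      rw [Finset.sum_congr rfl (fun x _ => hterm x)]
      simp only [Finset.sum_add_distrib, Finset.sum_neg_distrib, ← Finset.sum_mul]
      rw [sum_pow_C e hq3 _ (by omega), sum_pow_C e hq3 _ (by omega)]
      have hRne : ¬ r = r' := fun h => by rw [hval] at h; omega
      rw [if_neg hRne, if_neg (by omega : ¬ (K-2) + (q-1-(r':ℕ)) = q-1),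
        if_neg (by omega : ¬ (K-1) + (q-1-(r':ℕ)) = q-1),
        if_neg (by omega : ¬ ((r':ℕ) = K-2)), if_neg (by omega : ¬ ((r':ℕ) = K-1))]
      simp
    · -- a row, a dual
      have hterm : ∀ x : F, Gmat e K r (colOf e x) * Rmat e K (colOf e x) r'
          = C (x^((K-2) + (q+2-K))) + C (x^((K-1) + (q+2-K))) * X := by
        intro x
        rw [hG, Rmat_colOf, if_neg (by omega), if_pos hr']
        simp only [pow_add, map_mul]
        ring
      rw [Finset.sum_congr rfl (fun x _ => hterm x)]
      simp only [Finset.sum_add_distrib, ← Finset.sum_mul]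
      rw [sum_pow_C e hq3 _ (by omega), sum_pow_C e hq3 _ (by omega)]
      have hReq : r = r' := hval.2 (by omega)
      rw [if_pos hReq, if_neg (by omega : ¬ (K-2) + (q+2-K) = q-1),
        if_neg (by omega : ¬ (K-1) + (q+2-K) = q-1), if_pos hr']
      simp
    · -- a row, b dual
      have hr'K : (r':ℕ) = K-1 := by have := r'.isLt; omega
      have hterm : ∀ x : F, Gmat e K r (colOf e x) * Rmat e K (colOf e x) r'
          = -C (x^((K-2) + (q-K))) + (-C (x^((K-2) + (q+2-K)))) * X
            + (-C (x^((K-1) + (q-K)))) * X + (-C (x^((K-1) + (q+2-K)))) * (X*X) := by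
        intro x
        rw [hG, Rmat_colOf, if_neg (by omega), if_neg (by omega)]
        simp only [pow_add, map_mul]
        ring
      rw [Finset.sum_congr rfl (fun x _ => hterm x)]
      simp only [Finset.sum_add_distrib, Finset.sum_neg_distrib, ← Finset.sum_mul]
      rw [sum_pow_C e hq3 _ (by omega), sum_pow_C e hq3 _ (by omega),
        sum_pow_C e hq3 _ (by omega), sum_pow_C e hq3 _ (by omega)]
      have hRne : ¬ r = r' := fun h => by rw [hval] at h; omega
      rw [if_neg hRne, if_neg (by omega : ¬ (K-2) + (q-K) = q-1),
        if_neg (by omega : ¬ (K-2) + (q+2-K) = q-1),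
        if_pos (by omega : (K-1) + (q-K) = q-1),
        if_neg (by omega : ¬ (K-1) + (q+2-K) = q-1),
        if_neg (by omega : ¬ ((r':ℕ) = K-2)), if_pos hr'K]
      ring
  · -- r = row b
    have hrK1 : (r:ℕ) = K-1 := by have := r.isLt; omega
    have hG : ∀ x : F, Gmat e K r (colOf e x) = C (x^(K-1)) + X * C (x^(K-2)) := by
      intro x
      rw [Gmat_colOf, if_neg (by omega), if_neg (by omega)]
    have hGinf : (if (r:ℕ) = K-3 then (1:Polynomial F) else if (r:ℕ) = K-2 then 1 else 0)
        = 0 := by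
      rw [if_neg (by omega), if_neg (by omega)]
    rw [hGinf, zero_mul, add_zero]
    rcases lt_trichotomy (r':ℕ) (K-2) with hr' | hr' | hr'
    · -- b row, constant dual
      have hr'K : (r':ℕ) + 5 ≤ q := by omega
      have hterm : ∀ x : F, Gmat e K r (colOf e x) * Rmat e K (colOf e x) r'
          = -C (x^((K-1) + (q-1-(r':ℕ)))) + (-C (x^((K-2) + (q-1-(r':ℕ))))) * X := by
        intro x
        rw [hG, Rmat_colOf, if_pos hr']
        simp only [pow_add, map_mul]
        ring
      rw [Finset.sum_congr rfl (fun x _ => hterm x)]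
      simp only [Finset.sum_add_distrib, Finset.sum_neg_distrib, ← Finset.sum_mul]
      rw [sum_pow_C e hq3 _ (by omega), sum_pow_C e hq3 _ (by omega)]
      have hRne : ¬ r = r' := fun h => by rw [hval] at h; omega
      rw [if_neg hRne, if_neg (by omega : ¬ (K-1) + (q-1-(r':ℕ)) = q-1),
        if_neg (by omega : ¬ (K-2) + (q-1-(r':ℕ)) = q-1)]
      simp
    · -- b row, a dual
      have hterm : ∀ x : F, Gmat e K r (colOf e x) * Rmat e K (colOf e x) r'
          = C (x^((K-1) + (q+2-K))) + C (x^((K-2) + (q+2-K))) * X := by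
        intro x
        rw [hG, Rmat_colOf, if_neg (by omega), if_pos hr']
        simp only [pow_add, map_mul]
        ring
      rw [Finset.sum_congr rfl (fun x _ => hterm x)]
      simp only [Finset.sum_add_distrib, ← Finset.sum_mul]
      rw [sum_pow_C e hq3 _ (by omega), sum_pow_C e hq3 _ (by omega)]
      have hRne : ¬ r = r' := fun h => by rw [hval] at h; omega
      rw [if_neg hRne, if_neg (by omega : ¬ (K-1) + (q+2-K) = q-1),
        if_neg (by omega : ¬ (K-2) + (q+2-K) = q-1)]
      simp
    · -- b row, b dual
      have hr'K : (r':ℕ) = K-1 := by have := r'.isLt; omega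
      have hterm : ∀ x : F, Gmat e K r (colOf e x) * Rmat e K (colOf e x) r'
          = -C (x^((K-1) + (q-K))) + (-C (x^((K-1) + (q+2-K)))) * X
            + (-C (x^((K-2) + (q-K)))) * X + (-C (x^((K-2) + (q+2-K)))) * (X*X) := by
        intro x
        rw [hG, Rmat_colOf, if_neg (by omega), if_neg (by omega)]
        simp only [pow_add, map_mul]
        ring
      rw [Finset.sum_congr rfl (fun x _ => hterm x)]
      simp only [Finset.sum_add_distrib, Finset.sum_neg_distrib, ← Finset.sum_mul]
      rw [sum_pow_C e hq3 _ (by omega), sum_pow_C e hq3 _ (by omega),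
        sum_pow_C e hq3 _ (by omega), sum_pow_C e hq3 _ (by omega)]
      have hReq : r = r' := hval.2 (by omega)
      rw [if_pos hReq, if_pos (by omega : (K-1) + (q-K) = q-1),
        if_neg (by omega : ¬ (K-1) + (q+2-K) = q-1),
        if_neg (by omega : ¬ (K-2) + (q-K) = q-1),
        if_neg (by omega : ¬ (K-2) + (q+2-K) = q-1)]
      simp


lemma rowDegree_const {q K : ℕ} (e : Fin q ≃ F) (r : Fin K) (hr : (r:ℕ) < K-2) :
    rowDegree (Gmat e K) r = 0 := by
  unfold rowDegree
  rw [← Nat.le_zero]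
  refine Finset.sup_le (fun j _ => Nat.le_zero.2 ?_)
  by_cases hj : (j:ℕ) < q
  · simp [Gmat, dif_pos hj, if_pos hr]
  · simp only [Gmat, dif_neg hj]
    split_ifs <;> simp

lemma natDegree_linear_le' (a b : F) : (C a + X * C b).natDegree ≤ 1 := by
  refine le_trans (Polynomial.natDegree_add_le _ _) ?_
  simp only [Polynomial.natDegree_C, max_le_iff]
  constructor
  · omega
  · calc (X * C b).natDegree = (C b * X).natDegree := by rw [mul_comm]
      _ ≤ 1 := by
          have := Polynomial.natDegree_C_mul_X_pow_le b 1
          simpa using this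

lemma rowDegree_ab {q K : ℕ} (e : Fin q ≃ F) (hK3 : 3 ≤ K) (r : Fin K)
    (hr : ¬ (r:ℕ) < K-2) : rowDegree (Gmat e K) r = 1 := by
  apply le_antisymm
  · unfold rowDegree
    refine Finset.sup_le (fun j _ => ?_)
    by_cases hj : (j:ℕ) < q
    · simp only [Gmat, dif_pos hj, if_neg hr]
      split_ifs <;> exact natDegree_linear_le' _ _
    · simp only [Gmat, dif_neg hj]
      split_ifs <;> simp
  · -- the column of the point 1 witnesses degree one
    unfold rowDegree
    have hmem : colOf e 1 ∈ (Finset.univ : Finset (Fin (q+1))) := Finset.mem_univ _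
    refine le_trans ?_ (Finset.le_sup hmem)
    rw [Gmat_colOf, if_neg hr]
    have h1 : ∀ (c d : ℕ), (C ((1:F)^c) + X * C ((1:F)^d)).natDegree = 1 := by
      intro c d
      simp only [one_pow, map_one, mul_one]
      rw [add_comm]
      exact Polynomial.natDegree_X_add_C 1
    split
    · rw [h1]
    · rw [h1]

lemma convDegree_G {q K : ℕ} (e : Fin q ≃ F) (hK3 : 3 ≤ K) :
    convDegree (Gmat e K) = 2 := by
  unfold convDegree
  obtain ⟨K', rfl⟩ : ∃ K', K = K' + 2 := ⟨K - 2, by omega⟩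
  rw [Fin.sum_univ_castSucc, Fin.sum_univ_castSucc]
  have hz : ∀ i : Fin K', rowDegree (Gmat e (K'+2)) (i.castSucc.castSucc) = 0 := by
    intro i
    exact rowDegree_const e _ (by
      have : ((i.castSucc.castSucc : Fin (K'+2)) : ℕ) = (i : ℕ) := rfl
      rw [this]
      have := i.isLt
      omega)
  rw [Finset.sum_congr rfl (fun i _ => hz i), Finset.sum_const_zero,
    rowDegree_ab e hK3 _ (by simp), rowDegree_ab e hK3 _ (by simp [Fin.last])]

lemma convMemory_G {q K : ℕ} (e : Fin q ≃ F) (hK3 : 3 ≤ K) :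
    convMemory (Gmat e K) = 1 := by
  unfold convMemory
  apply le_antisymm
  · refine Finset.sup_le (fun r _ => ?_)
    rcases lt_or_ge (r : ℕ) (K-2) with h | h
    · rw [rowDegree_const e r h]; omega
    · rw [rowDegree_ab e hK3 r (by omega)]
  · have hmem : (⟨K-1, by omega⟩ : Fin K) ∈ (Finset.univ : Finset (Fin K)) :=
      Finset.mem_univ _
    refine le_trans ?_ (Finset.le_sup hmem)
    rw [rowDegree_ab e hK3 _ (by simp; omega)]


lemma poly_zero_of_eval {q : ℕ} (e : Fin q ≃ F) (Q : Polynomial F)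
    (hdeg : Q.natDegree < q) (h : ∀ x : F, Q.eval x = 0) : Q = 0 := by
  by_contra hQ
  have hcard : Fintype.card F = q := by
    rw [← Fintype.card_fin q]; exact Fintype.card_congr e.symm
  have hsub : (Finset.univ : Finset F) ⊆ Q.roots.toFinset := by
    intro x _
    rw [Multiset.mem_toFinset, Polynomial.mem_roots hQ]
    exact h x
  have := Finset.card_le_card hsub
  rw [Finset.card_univ, hcard] at this
  have h2 := le_trans (Multiset.toFinset_card_le Q.roots) (Polynomial.card_roots' Q)
  omega

lemma const_codeword {q K : ℕ} (e : Fin q ≃ F) (hq : 9 ≤ q) (hK3 : 3 ≤ K) (hKq : K+2 ≤ q)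
    (v : Fin (q+1) → Polynomial F) (hv : v ∈ convCode (Gmat e K))
    (hconst : ∀ col, (v col).natDegree = 0) :
    ∃ μ : Fin K → F, (∀ r : Fin K, ¬ (r:ℕ) < K-2 → μ r = 0) ∧
      (∀ col, v col = ∑ r : Fin K, C (μ r) * Gmat e K r col) := by
  classical
  obtain ⟨u, hu⟩ := hv
  set ra : Fin K := ⟨K-2, by omega⟩ with hra
  set rb : Fin K := ⟨K-1, by omega⟩ with hrb
  have hslice0 : ∀ j : ℕ, 1 ≤ j → mkPoly K (cfun hK3 u j) = 0 := by
    intro j hj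
    refine poly_zero_of_eval e _ ?_ ?_
    · have := mkPoly_natDegree_le K (cfun hK3 u j) (K-1) (fun m hm hmK => by omega)
      omega
    · intro x
      rw [← eval_slice e hK3 u j x, ← hu (colOf e x)]
      exact Polynomial.coeff_eq_zero_of_natDegree_lt (by rw [hconst]; omega)
  have hE1 : ∀ j : ℕ, 1 ≤ j → ∀ r : Fin K, (r:ℕ) < K-2 → (u r).coeff j = 0 := by
    intro j hj r hm
    have := congrArg (fun p => Polynomial.coeff p (r:ℕ)) (hslice0 j hj)
    simp only [Polynomial.coeff_zero, mkPoly_coeff] at this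
    rw [if_pos (by omega : (r:ℕ) < K)] at this
    unfold cfun at this
    rw [dif_pos hm] at this
    exact this
  have hE2 : ∀ j : ℕ, 1 ≤ j → (u ra).coeff j + (u rb).coeff (j-1) = 0 := by
    intro j hj
    have := congrArg (fun p => Polynomial.coeff p (K-2)) (hslice0 j hj)
    simp only [Polynomial.coeff_zero, mkPoly_coeff] at this
    rw [if_pos (by omega : K-2 < K)] at this
    unfold cfun at this
    rw [dif_neg (by omega), if_pos rfl] at this
    unfold prevc at this
    rw [if_neg (by omega)] at this
    exact this
  have hE3 : ∀ j : ℕ, 1 ≤ j → (u rb).coeff j + (u ra).coeff (j-1) = 0 := by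
    intro j hj
    have := congrArg (fun p => Polynomial.coeff p (K-1)) (hslice0 j hj)
    simp only [Polynomial.coeff_zero, mkPoly_coeff] at this
    rw [if_pos (by omega : K-1 < K)] at this
    unfold cfun at this
    rw [dif_neg (by omega), if_neg (by omega), if_pos rfl] at this
    unfold prevc at this
    rw [if_neg (by omega)] at this
    exact this
  have hstep : ∀ j : ℕ, (u ra).coeff (j+2) = (u ra).coeff j
      ∧ (u rb).coeff (j+2) = (u rb).coeff j := by
    intro j
    have h2 := hE2 (j+2) (by omega)
    have h3 := hE3 (j+1) (by omega)
    have h2' := hE3 (j+2) (by omega)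
    have h3' := hE2 (j+1) (by omega)
    have e1 : (j+2) - 1 = j + 1 := by omega
    have e2 : (j+1) - 1 = j := by omega
    rw [e1] at h2 h2'
    rw [e2] at h3 h3'
    constructor
    · linear_combination h2 - h3
    · linear_combination h2' - h3'
  have hiter : ∀ (mIt j : ℕ), (u ra).coeff (j + 2*mIt) = (u ra).coeff j
      ∧ (u rb).coeff (j + 2*mIt) = (u rb).coeff j := by
    intro mIt
    induction mIt with
    | zero => intro j; simp
    | succ m ih =>
        intro j
        have h1 := ih (j+2)
        have h2 := hstep j
        have : j + 2*(m+1) = (j+2) + 2*m := by omega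
        rw [this]
        exact ⟨h1.1.trans h2.1, h1.2.trans h2.2⟩
  have hA : ∀ j : ℕ, (u ra).coeff j = 0 ∧ (u rb).coeff j = 0 := by
    intro j
    set N := max (u ra).natDegree (u rb).natDegree + 1 with hN
    have h1 := hiter N j
    constructor
    · rw [← h1.1]
      exact Polynomial.coeff_eq_zero_of_natDegree_lt (by omega)
    · rw [← h1.2]
      exact Polynomial.coeff_eq_zero_of_natDegree_lt (by omega)
  have hu_ra : u ra = 0 := Polynomial.ext (fun j => by rw [(hA j).1, Polynomial.coeff_zero])
  have hu_rb : u rb = 0 := Polynomial.ext (fun j => by rw [(hA j).2, Polynomial.coeff_zero])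
  have hconstrow : ∀ r : Fin K, (r:ℕ) < K-2 → u r = C ((u r).coeff 0) := by
    intro r hr
    apply Polynomial.ext
    intro n
    cases n with
    | zero => simp
    | succ m =>
        rw [hE1 (m+1) (by omega) r hr, Polynomial.coeff_C]
        simp
  refine ⟨fun r => if (r:ℕ) < K-2 then (u r).coeff 0 else 0, fun r hr => if_neg hr, ?_⟩
  intro col
  rw [hu col]
  refine Finset.sum_congr rfl (fun r _ => ?_)
  beta_reduce
  by_cases hr : (r:ℕ) < K-2
  · rw [if_pos hr, ← hconstrow r hr]
  · rw [if_neg hr]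
    have : r = ra ∨ r = rb := by
      rcases Nat.lt_or_ge (r : ℕ) (K-1) with h2 | h2
      · left; apply Fin.ext; simp [hra]; omega
      · right; apply Fin.ext; simp [hrb]; have := r.isLt; omega
    rcases this with rfl | rfl
    · rw [hu_ra]; simp
    · rw [hu_rb]; simp


lemma reduced_G {q K : ℕ} (e : Fin q ≃ F) (hq : 9 ≤ q) (hK3 : 3 ≤ K) (hKq : K + 2 ≤ q) :
    isReduced (Gmat e K) := by
  classical
  have hcardF : Fintype.card F = q := by
    rw [← Fintype.card_fin q]; exact Fintype.card_congr e.symm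
  refine ⟨⟨Rmat e K, GR_one e hq hK3 hKq⟩, ?_⟩
  intro G' hbasic hcode
  rw [convDegree_G e hK3]
  by_contra hlt
  push_neg at hlt
  obtain ⟨R', hR'⟩ := hbasic
  set B := Finset.univ.filter (fun r : Fin K => rowDegree G' r ≠ 0) with hBdef
  have hBcard : B.card ≤ 1 := by
    have h1 : B.card ≤ ∑ r ∈ B, rowDegree G' r := by
      rw [Finset.card_eq_sum_ones]
      refine Finset.sum_le_sum (fun r hr => ?_)
      rw [hBdef, Finset.mem_filter] at hr
      omega
    have h2 : ∑ r ∈ B, rowDegree G' r ≤ ∑ r, rowDegree G' r :=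
      Finset.sum_le_sum_of_subset (Finset.subset_univ _)
    unfold convDegree at hlt
    omega
  have hcompl : K - 1 ≤ (Finset.univ \ B).card := by
    rw [Finset.card_sdiff_of_subset (Finset.subset_univ _), Finset.card_univ, Fintype.card_fin]
    omega
  obtain ⟨tset, htsub, htcard⟩ := Finset.exists_subset_card_eq hcompl
  set eqT := tset.equivFinOfCardEq htcard with heqT
  set sel : Fin (K-1) → Fin K := fun s => (eqT.symm s : Fin K) with hsel
  have hselinj : Function.Injective sel := by
    intro a b h
    have : eqT.symm a = eqT.symm b := Subtype.ext h
    simpa using congrArg eqT this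
  have hselmem : ∀ s, sel s ∈ tset := fun s => (eqT.symm s).2
  have hdeg0 : ∀ s, rowDegree G' (sel s) = 0 := by
    intro s
    have h1 := htsub (hselmem s)
    rw [Finset.mem_sdiff, hBdef, Finset.mem_filter] at h1
    have := h1.2
    push_neg at this
    by_contra hne
    exact hne (by tauto)
  have hentry : ∀ s col, (G' (sel s) col).natDegree = 0 := by
    intro s col
    have h1 : (G' (sel s) col).natDegree ≤ rowDegree G' (sel s) := by
      unfold rowDegree
      exact Finset.le_sup (f := fun j => (G' (sel s) j).natDegree) (Finset.mem_univ col)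
    rw [hdeg0 s] at h1
    omega
  have hrowcode : ∀ rr : Fin K, (fun col => G' rr col) ∈ convCode (Gmat e K) := by
    intro rr
    rw [← hcode]
    refine ⟨fun r' => if r' = rr then 1 else 0, fun col => ?_⟩
    have hterm : ∀ r' : Fin K, (if r' = rr then (1:Polynomial F) else 0) * G' r' col
        = (if r' = rr then G' r' col else 0) := by
      intro r'; split_ifs <;> simp
    rw [Finset.sum_congr rfl (fun r' _ => hterm r')]
    simp
  choose μ hμ0 hμeq using fun s : Fin (K-1) =>
    const_codeword e hq hK3 hKq _ (hrowcode (sel s)) (hentry s)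
  set Ψ : (Fin (K-1) → F) → (Fin (K-2) → F) :=
    fun lam m => ∑ s, lam s * μ s (⟨(m:ℕ), by omega⟩ : Fin K) with hΨ
  have hWform : ∀ (lam : Fin (K-1) → F) (col : Fin (q+1)),
      (∑ s, C (lam s) * G' (sel s) col)
        = ∑ r : Fin K, C (∑ s, lam s * μ s r) * Gmat e K r col := by
    intro lam col
    calc ∑ s, C (lam s) * G' (sel s) col
        = ∑ s, ∑ r : Fin K, C (lam s) * (C (μ s r) * Gmat e K r col) := by
          refine Finset.sum_congr rfl (fun s _ => ?_)
          rw [hμeq s col, Finset.mul_sum]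
      _ = ∑ r : Fin K, ∑ s, C (lam s) * (C (μ s r) * Gmat e K r col) := Finset.sum_comm
      _ = ∑ r : Fin K, C (∑ s, lam s * μ s r) * Gmat e K r col := by
          refine Finset.sum_congr rfl (fun r _ => ?_)
          rw [map_sum, Finset.sum_mul]
          refine Finset.sum_congr rfl (fun s _ => ?_)
          rw [map_mul, mul_assoc]
  have hrec : ∀ (lam : Fin (K-1) → F) (s0 : Fin (K-1)),
      (∑ col, (∑ s, C (lam s) * G' (sel s) col) * R' col (sel s0)) = C (lam s0) := by
    intro lam s0
    calc ∑ col, (∑ s, C (lam s) * G' (sel s) col) * R' col (sel s0)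
        = ∑ col, ∑ s, C (lam s) * G' (sel s) col * R' col (sel s0) := by
          refine Finset.sum_congr rfl (fun col _ => ?_)
          rw [Finset.sum_mul]
      _ = ∑ s, ∑ col, C (lam s) * G' (sel s) col * R' col (sel s0) := Finset.sum_comm
      _ = ∑ s, C (lam s) * ∑ col, G' (sel s) col * R' col (sel s0) := by
          refine Finset.sum_congr rfl (fun s _ => ?_)
          rw [Finset.mul_sum]
          refine Finset.sum_congr rfl (fun col _ => ?_)
          rw [mul_assoc]
      _ = ∑ s, C (lam s) * (G' * R') (sel s) (sel s0) := by
          refine Finset.sum_congr rfl (fun s _ => ?_)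
          rw [Matrix.mul_apply]
      _ = C (lam s0) := by
          rw [hR']
          rw [Finset.sum_eq_single s0]
          · rw [Matrix.one_apply_eq, mul_one]
          · intro b _ hb
            rw [Matrix.one_apply_ne (fun h => hb (hselinj h)), mul_zero]
          · intro h; exact absurd (Finset.mem_univ _) h
  have hΨinj : Function.Injective Ψ := by
    intro lam lam' hll
    have hPhi : ∀ r : Fin K, (∑ s, lam s * μ s r) = (∑ s, lam' s * μ s r) := by
      intro r
      by_cases hr : (r:ℕ) < K-2
      · have h1 := congrFun hll (⟨(r:ℕ), hr⟩ : Fin (K-2))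
        simpa using h1
      · refine Finset.sum_congr rfl (fun s _ => ?_)
        rw [hμ0 s r hr, mul_zero, mul_zero]
    have hW : ∀ col, (∑ s, C (lam s) * G' (sel s) col)
        = ∑ s, C (lam' s) * G' (sel s) col := by
      intro col
      rw [hWform, hWform]
      refine Finset.sum_congr rfl (fun r _ => ?_)
      rw [hPhi r]
    funext s0
    have h1 := hrec lam s0
    have h2 := hrec lam' s0
    rw [Finset.sum_congr rfl (fun col _ => by rw [hW col])] at h1
    rw [h2] at h1
    exact (Polynomial.C_inj.1 h1.symm)
  have hcard := Fintype.card_le_of_injective Ψ hΨinj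
  rw [Fintype.card_fun, Fintype.card_fun, Fintype.card_fin, Fintype.card_fin, hcardF] at hcard
  have : q ^ (K-2) < q ^ (K-1) := Nat.pow_lt_pow_right (by omega) (by omega)
  omega

end MDSConv

theorem mds_convolutional_odd (p t q n a : ℕ) (hp : p.Prime) (hodd : Odd p)
    (ht : 2 ≤ t) (hq : q = p ^ t) (hn : n = q + 1) (ha : a = n / 2)
    (i : ℕ) (hi1 : 2 ≤ i) (hi2 : i ≤ a - 1)
    (F : Type*) [Field F] [Fintype F] [DecidableEq F] (hF : Fintype.card F = q) :
    ∃ G : Matrix (Fin (n - 2 * i + 1)) (Fin n) (Polynomial F),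
      isReduced G ∧
      convDegree G = 2 ∧
      convMemory G = 1 ∧
      (∀ v ∈ convCode G, v ≠ 0 → 2 * i + 2 ≤ polyWeight v) ∧
      (∃ v ∈ convCode G, v ≠ 0 ∧ polyWeight v = 2 * i + 2) ∧
      -- the free distance attains the generalized Singleton bound
      2 * i + 2 = (n - (n - 2 * i + 1)) * (2 / (n - 2 * i + 1) + 1) + 2 + 1 := by
  subst hn
  subst ha
  have hp3 : 3 ≤ p := by
    obtain ⟨mp, hmp⟩ := hodd
    have := hp.two_le
    omega
  have hq9 : 9 ≤ q := by
    have : (9:ℕ) = 3^2 := rfl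
    rw [hq, this]
    calc (3:ℕ)^2 ≤ p^2 := Nat.pow_le_pow_left hp3 2
      _ ≤ p^t := Nat.pow_le_pow_right (by omega) ht
  have hqodd : Odd q := hq ▸ hodd.pow
  obtain ⟨m, hm⟩ := hqodd
  have h2i : 2*i + 1 ≤ q := by omega
  have hK3 : 3 ≤ q + 1 - 2*i + 1 := by omega
  have hKq : (q + 1 - 2*i + 1) + 2 ≤ q := by omega
  set e : Fin q ≃ F := (Fintype.equivFinOfCardEq hF).symm with he
  refine ⟨MDSConv.Gmat e (q + 1 - 2*i + 1),
    MDSConv.reduced_G e hq9 hK3 hKq,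
    MDSConv.convDegree_G e hK3,
    MDSConv.convMemory_G e hK3, ?_, ?_, ?_⟩
  · intro v hv hv0
    have := MDSConv.dist_lb e hq9 hK3 hKq v hv hv0
    omega
  · obtain ⟨v, hmem, hne, hw⟩ := MDSConv.exists_min_weight e hq9 hK3 hKq
    exact ⟨v, hmem, hne, by omega⟩
  · have hdiv : 2 / (q + 1 - 2*i + 1) = 0 := Nat.div_eq_of_lt (by omega)
    rw [hdiv]
    omega
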